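/- Let G be a (c−1)-atom (a connected graph with no clique separator of size at most c−1), and let T_c(G) be the bipartite incidence graph whose nodes are the maximal c-atoms of G and the inclusion-minimal cliques of size at most c that separate some pair of vertices of G, with an edge between a maximal c-atom G[A] and a minimal clique separator C whenever C ⊆ A. Then T_c(G) is connected. -/

import Mathlib

variable {V : Type*}

/-- `C` separates `x` and `y` in `G`: neither endpoint is in `C` and every walk
from `x` to `y` meets `C`. -/
def Separates (G : SimpleGraph V) (C : Set V) (x y : V) : Prop :=
  x ∉ C ∧ y ∉ C ∧ ∀ p : G.Walk x y, ∃ z ∈ C, z ∈ p.support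

/-- `x` and `y` are `c`-inseparable in `G`: no clique of size at most `c` separates them. -/
def CInsep (G : SimpleGraph V) (c : ℕ) (x y : V) : Prop :=
  ∀ C : Set V, G.IsClique C → C.ncard ≤ c → ¬ Separates G C x y

/-- A set is `c`-inseparable if all its pairs of vertices are. -/
def InsepSet (G : SimpleGraph V) (c : ℕ) (A : Set V) : Prop :=
  ∀ x ∈ A, ∀ y ∈ A, CInsep G c x y

/-- Maximal `c`-inseparable set. -/
def MaxInsepSet (G : SimpleGraph V) (c : ℕ) (A : Set V) : Prop :=
  InsepSet G c A ∧ ∀ B, A ⊆ B → InsepSet G c B → B = A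

/-- `C` separates `x` and `y` within the induced subgraph `G[A]`. -/
def SeparatesWithin (G : SimpleGraph V) (A C : Set V) (x y : V) : Prop :=
  x ∈ A \ C ∧ y ∈ A \ C ∧
    ∀ p : G.Walk x y, (∀ z ∈ p.support, z ∈ A) → ∃ z ∈ C, z ∈ p.support

/-- `G[A]` is a `c`-atom: it has no clique separator of size at most `c`. -/
def AtomWithin (G : SimpleGraph V) (c : ℕ) (A : Set V) : Prop :=
  ¬ ∃ C : Set V, C ⊆ A ∧ G.IsClique C ∧ C.ncard ≤ c ∧ ∃ x y, SeparatesWithin G A C x y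

/-- `G[A]` is a maximal `c`-atom of `G`. -/
def MaxAtom (G : SimpleGraph V) (c : ℕ) (A : Set V) : Prop :=
  AtomWithin G c A ∧ ∀ B, A ⊆ B → AtomWithin G c B → B = A

/-- `C` is an inclusion-wise minimal clique separator of size at most `c`:
a clique of size at most `c` that separates some pair of vertices and is
inclusion-minimal among cliques separating that pair. -/
def MinCliqueSep (G : SimpleGraph V) (c : ℕ) (C : Set V) : Prop :=
  G.IsClique C ∧ C.ncard ≤ c ∧
    ∃ x y : V, Separates G C x y ∧
      ∀ C' ⊆ C, G.IsClique C' → Separates G C' x y → C' = C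

/-- Nodes of `T_c(G)` corresponding to maximal `c`-atoms (equivalently, maximal
`c`-inseparable vertex sets). -/
def AtomNode (G : SimpleGraph V) (c : ℕ) : Type _ := {A : Set V // MaxInsepSet G c A}

/-- Nodes of `T_c(G)` corresponding to minimal clique separators of size at most `c`. -/
def SepNode (G : SimpleGraph V) (c : ℕ) : Type _ := {C : Set V // MinCliqueSep G c C}

/-- The bipartite incidence graph `T_c(G)`: a maximal `c`-atom `A` is joined to a
minimal clique separator `C` exactly when `C ⊆ A`. -/
def TcGraph (G : SimpleGraph V) (c : ℕ) : SimpleGraph (AtomNode G c ⊕ SepNode G c) where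
  Adj n m :=
    (∃ (A : AtomNode G c) (C : SepNode G c),
        n = Sum.inl A ∧ m = Sum.inr C ∧ C.val ⊆ A.val) ∨
    (∃ (A : AtomNode G c) (C : SepNode G c),
        n = Sum.inr C ∧ m = Sum.inl A ∧ C.val ⊆ A.val)
  symm := by
    constructor
    rintro n m (⟨A, C, rfl, rfl, h⟩ | ⟨A, C, rfl, rfl, h⟩)
    · exact Or.inr ⟨A, C, rfl, rfl, h⟩
    · exact Or.inl ⟨A, C, rfl, rfl, h⟩
  loopless := by
    constructor
    rintro n (⟨A, C, rfl, h, -⟩ | ⟨A, C, rfl, h, -⟩) <;> exact absurd h (by simp)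

/-- `G` has no clique separator of size at most `c - 1`. -/
def NoSmallCliqueSep (G : SimpleGraph V) (c : ℕ) : Prop :=
  ∀ C : Set V, G.IsClique C → C.ncard ≤ c - 1 → ¬ ∃ x y, Separates G C x y

namespace Aux

/-- reachability avoiding a set -/
def AReach (G : SimpleGraph V) (S : Set V) (x y : V) : Prop :=
  ∃ p : G.Walk x y, ∀ z ∈ p.support, z ∉ S

variable {G : SimpleGraph V} {S S' : Set V} {x y z : V} {c : ℕ}

lemma AReach.left_not_mem (h : AReach G S x y) : x ∉ S := by
  obtain ⟨p, hp⟩ := h; exact hp x p.start_mem_support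

lemma AReach.right_not_mem (h : AReach G S x y) : y ∉ S := by
  obtain ⟨p, hp⟩ := h; exact hp y p.end_mem_support

lemma AReach.refl (hx : x ∉ S) : AReach G S x x :=
  ⟨SimpleGraph.Walk.nil, by simp [hx]⟩

lemma AReach.symm (h : AReach G S x y) : AReach G S y x := by
  obtain ⟨p, hp⟩ := h
  exact ⟨p.reverse, by simpa using hp⟩

lemma AReach.trans (h : AReach G S x y) (h' : AReach G S y z) : AReach G S x z := by
  obtain ⟨p, hp⟩ := h; obtain ⟨q, hq⟩ := h'
  refine ⟨p.append q, fun w hw => ?_⟩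
  rcases (SimpleGraph.Walk.mem_support_append_iff _ _).1 hw with h | h
  · exact hp w h
  · exact hq w h

lemma AReach.mono (hss : S' ⊆ S) (h : AReach G S x y) : AReach G S' x y := by
  obtain ⟨p, hp⟩ := h
  exact ⟨p, fun z hz hzS => hp z hz (hss hzS)⟩

lemma AReach.of_adj (hadj : G.Adj x y) (hx : x ∉ S) (hy : y ∉ S) : AReach G S x y :=
  ⟨hadj.toWalk, by simp [hx, hy]⟩

lemma areach_of_mem_support (p : G.Walk x y) (hp : ∀ w ∈ p.support, w ∉ S)
    (hz : z ∈ p.support) : AReach G S x z := by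
  classical
  exact ⟨p.takeUntil z hz, fun w hw => hp w (p.support_takeUntil_subset hz hw)⟩

lemma separates_iff : Separates G S x y ↔ x ∉ S ∧ y ∉ S ∧ ¬ AReach G S x y := by
  unfold Separates AReach
  refine and_congr_right fun _ => and_congr_right fun _ => ?_
  push_neg
  constructor
  · intro h p
    obtain ⟨w, hw, hw'⟩ := h p
    exact ⟨w, hw', hw⟩
  · intro h p
    obtain ⟨w, hw, hw'⟩ := h p
    exact ⟨w, hw', hw⟩

lemma Separates.symm' (h : Separates G S x y) : Separates G S y x := by
  rw [separates_iff] at h ⊢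
  exact ⟨h.2.1, h.1, fun hr => h.2.2 hr.symm⟩

lemma not_separates_self : ¬ Separates G S x x := by
  rw [separates_iff]
  rintro ⟨hx, -, h⟩
  exact h (AReach.refl hx)

/-- any clique is an inseparable set -/
lemma clique_insep (hC : G.IsClique S) : InsepSet G c S := by
  intro x hx y hy D _ _ hsep
  rw [separates_iff] at hsep
  obtain ⟨hxD, hyD, hr⟩ := hsep
  rcases eq_or_ne x y with rfl | hne
  · exact hr (AReach.refl hxD)
  · exact hr (AReach.of_adj (hC hx hy hne) hxD hyD)

/-- extend an inseparable set to a maximal one -/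
lemma exists_max_insep [Fintype V] {A : Set V} (hA : InsepSet G c A) :
    ∃ B, MaxInsepSet G c B ∧ A ⊆ B := by
  classical
  obtain ⟨B, hB, hmax⟩ := Set.Finite.exists_maximalFor id
    {B : Set V | A ⊆ B ∧ InsepSet G c B} (Set.toFinite _) ⟨A, subset_rfl, hA⟩
  refine ⟨B, ⟨hB.2, fun B' hBB' hB' => ?_⟩, hB.1⟩
  exact le_antisymm (hmax ⟨hB.1.trans hBB', hB'⟩ hBB') hBB'

/-- shrink a separating clique to a minimal one -/
lemma exists_min_sep [Fintype V] {E : Set V} (hclq : G.IsClique E) (hcard : E.ncard ≤ c)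
    (hsep : Separates G E x y) :
    ∃ F ⊆ E, MinCliqueSep G c F ∧ Separates G F x y := by
  classical
  obtain ⟨F, hF, hmin⟩ := Set.Finite.exists_minimalFor id
    {F : Set V | F ⊆ E ∧ Separates G F x y} (Set.toFinite _) ⟨E, subset_rfl, hsep⟩
  have hFclq : G.IsClique F := hclq.subset hF.1
  have hFcard : F.ncard ≤ c := le_trans (Set.ncard_le_ncard hF.1 (Set.toFinite _)) hcard
  refine ⟨F, hF.1, ⟨hFclq, hFcard, x, y, hF.2, fun C' hC'F _ hC'sep => ?_⟩, hF.2⟩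
  exact le_antisymm hC'F (hmin ⟨hC'F.trans hF.1, hC'sep⟩ hC'F)

end Aux

namespace Aux2
open Aux

variable {G : SimpleGraph V} {S T C : Set V} {x y z : V} {c : ℕ}

/-- walk cleaning: walks between vertices of `T` can be rerouted inside `T`,
when the boundary of `T` is the clique `C ⊆ T`. -/
lemma clean_walk (hCT : C ⊆ T) (hclq : G.IsClique C)
    (hbd : ∀ x y, G.Adj x y → x ∈ T → x ∉ C → y ∈ T) :
    ∀ {a w : V} (R : G.Walk a w), w ∈ T →
      (a ∈ T → ∃ R' : G.Walk a w, ∀ z ∈ R'.support, z ∈ T ∧ z ∈ R.support) ∧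
      (a ∉ T → ∃ a', a' ∈ C ∧ a' ∈ R.support ∧
        ∃ R' : G.Walk a' w, ∀ z ∈ R'.support, z ∈ T ∧ z ∈ R.support) := by
  intro a w R
  induction R with
  | nil =>
    intro hw
    refine ⟨fun _ => ⟨SimpleGraph.Walk.nil, by simp [hw]⟩, fun ha => absurd hw ha⟩
  | @cons a b w h q ih =>
    intro hw
    have ih' := ih hw
    constructor
    · intro ha
      by_cases hb : b ∈ T
      · obtain ⟨R', hR'⟩ := ih'.1 hb
        refine ⟨SimpleGraph.Walk.cons h R', ?_⟩
        intro z hz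
        rcases (SimpleGraph.Walk.support_cons _ _).symm ▸ hz with hz'
        rw [List.mem_cons] at hz'
        rcases hz' with rfl | hz'
        · exact ⟨ha, SimpleGraph.Walk.start_mem_support _⟩
        · exact ⟨(hR' z hz').1, by
            rw [SimpleGraph.Walk.support_cons, List.mem_cons]; exact Or.inr (hR' z hz').2⟩
      · have haC : a ∈ C := by
          by_contra haC
          exact hb (hbd a b h ha haC)
        obtain ⟨a', ha'C, ha'sup, R', hR'⟩ := ih'.2 hb
        have hsub : ∀ z, z ∈ R'.support → z ∈ T ∧ z ∈ (SimpleGraph.Walk.cons h q).support := by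
          intro z hz
          refine ⟨(hR' z hz).1, ?_⟩
          rw [SimpleGraph.Walk.support_cons, List.mem_cons]
          exact Or.inr (hR' z hz).2
        rcases eq_or_ne a a' with rfl | hne
        · exact ⟨R', hsub⟩
        · refine ⟨SimpleGraph.Walk.cons (hclq haC ha'C hne) R', ?_⟩
          intro z hz
          rw [SimpleGraph.Walk.support_cons, List.mem_cons] at hz
          rcases hz with rfl | hz
          · exact ⟨hCT haC, SimpleGraph.Walk.start_mem_support _⟩
          · exact hsub z hz
    · intro ha
      by_cases hb : b ∈ T
      · have hbC : b ∈ C := by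
          by_contra hbC
          exact ha (hbd b a h.symm hb hbC)
        obtain ⟨R', hR'⟩ := ih'.1 hb
        refine ⟨b, hbC, ?_, R', ?_⟩
        · rw [SimpleGraph.Walk.support_cons, List.mem_cons]
          exact Or.inr (SimpleGraph.Walk.start_mem_support q)
        · intro z hz
          refine ⟨(hR' z hz).1, ?_⟩
          rw [SimpleGraph.Walk.support_cons, List.mem_cons]
          exact Or.inr (hR' z hz).2
      · obtain ⟨a', ha'C, ha'sup, R', hR'⟩ := ih'.2 hb
        refine ⟨a', ha'C, ?_, R', ?_⟩
        · rw [SimpleGraph.Walk.support_cons, List.mem_cons]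
          exact Or.inr ha'sup
        · intro z hz
          refine ⟨(hR' z hz).1, ?_⟩
          rw [SimpleGraph.Walk.support_cons, List.mem_cons]
          exact Or.inr (hR' z hz).2

/-- cleaning a separator into `T` -/
lemma separates_inter {E : Set V} (hCT : C ⊆ T) (hclq : G.IsClique C)
    (hbd : ∀ x y, G.Adj x y → x ∈ T → x ∉ C → y ∈ T)
    (hsep : Separates G E x y) (hx : x ∈ T) (hy : y ∈ T) :
    Separates G (E ∩ T) x y := by
  obtain ⟨hxE, hyE, hwalks⟩ := hsep
  refine ⟨fun h => hxE h.1, fun h => hyE h.1, fun p => ?_⟩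
  obtain ⟨R', hR'⟩ := (clean_walk hCT hclq hbd p hy).1 hx
  obtain ⟨z, hzE, hzsup⟩ := hwalks R'
  exact ⟨z, ⟨hzE, (hR' z hzsup).1⟩, (hR' z hzsup).2⟩

/-- a suffix of a walk visiting `w` whose tail avoids `w` -/
lemma exists_last_visit {u v w : V} (p : G.Walk u v) (hw : w ∈ p.support) :
    ∃ q : G.Walk w v, (∀ z ∈ q.support, z ∈ p.support) ∧ w ∉ q.support.tail := by
  induction p with
  | nil =>
    rw [SimpleGraph.Walk.support_nil, List.mem_singleton] at hw
    subst hw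
    exact ⟨SimpleGraph.Walk.nil, by simp, by simp⟩
  | @cons a b v h q ih =>
    by_cases hwq : w ∈ q.support
    · obtain ⟨q', hq'1, hq'2⟩ := ih hwq
      refine ⟨q', fun z hz => ?_, hq'2⟩
      rw [SimpleGraph.Walk.support_cons, List.mem_cons]
      exact Or.inr (hq'1 z hz)
    · have : w = a := by
        rw [SimpleGraph.Walk.support_cons, List.mem_cons] at hw
        tauto
      subst this
      refine ⟨SimpleGraph.Walk.cons h q, fun z hz => hz, ?_⟩
      rw [SimpleGraph.Walk.support_cons]
      simpa using hwq

/-- vertices on the tail of a walk starting at `w` whose support meets `S` only in `w`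
can reach the endpoint avoiding `S`. -/
lemma tail_reaches {w v z : V} (q : G.Walk w v) (hsub : ∀ x ∈ q.support, x ∈ S → x = w)
    (htail : w ∉ q.support.tail) (hz : z ∈ q.support) (hzw : z ≠ w) :
    AReach G S z v := by
  classical
  have hspec := q.take_spec hz
  have hsupp : q.support = (q.takeUntil z hz).support ++ (q.dropUntil z hz).support.tail := by
    conv_lhs => rw [← hspec]
    rw [SimpleGraph.Walk.support_append]
  have h1 : q.support.tail
      = (q.takeUntil z hz).support.tail ++ (q.dropUntil z hz).support.tail := by
    rw [hsupp, SimpleGraph.Walk.support_eq_cons (q.takeUntil z hz)]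
    rfl
  have hwd : w ∉ (q.dropUntil z hz).support := by
    rw [SimpleGraph.Walk.support_eq_cons (q.dropUntil z hz), List.mem_cons]
    rintro (h | h)
    · exact hzw h.symm
    · exact htail (h1 ▸ List.mem_append_right _ h)
  refine ⟨q.dropUntil z hz, fun x hx hxS => ?_⟩
  have hxq : x ∈ q.support := q.support_dropUntil_subset hz hx
  have hxw : x = w := hsub x hxq hxS
  exact hwd (hxw ▸ hx)

end Aux2

namespace Aux3
open Aux Aux2

variable {G : SimpleGraph V} {c : ℕ}

/-- stronger version of exists_min_sep remembering the pair -/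
lemma exists_min_sep' [Fintype V] {E : Set V} {x y : V} (hclq : G.IsClique E)
    (hcard : E.ncard ≤ c) (hsep : Separates G E x y) :
    ∃ F ⊆ E, G.IsClique F ∧ F.ncard ≤ c ∧ Separates G F x y ∧
      ∀ C' ⊆ F, G.IsClique C' → Separates G C' x y → C' = F := by
  classical
  obtain ⟨F, hF, hmin⟩ := Set.Finite.exists_minimalFor id
    {F : Set V | F ⊆ E ∧ Separates G F x y} (Set.toFinite _) ⟨E, subset_rfl, hsep⟩
  exact ⟨F, hF.1, hclq.subset hF.1,
    le_trans (Set.ncard_le_ncard hF.1 (Set.toFinite _)) hcard, hF.2,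
    fun C' hC'F _ hC'sep => le_antisymm hC'F (hmin ⟨hC'F.trans hF.1, hC'sep⟩ hC'F)⟩

lemma not_sep_of_cinsep {x y : V} {D : Set V} (h : CInsep G c x y) (hclq : G.IsClique D)
    (hc : D.ncard ≤ c) (hx : x ∉ D) (hy : y ∉ D) : AReach G D x y := by
  have := h D hclq hc
  rw [separates_iff] at this
  push_neg at this
  by_contra hr
  exact hr (this hx hy)

/-- Crux: a maximal inseparable set separable from an outside vertex contains a
minimal clique separator. -/
lemma crux [Fintype V] (hatom : NoSmallCliqueSep G c)
    {A : Set V} (hA : MaxInsepSet G c A) {v : V}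
    (hsep : ∃ a ∈ A, ∃ D : Set V, G.IsClique D ∧ D.ncard ≤ c ∧ Separates G D a v) :
    ∃ C : Set V, MinCliqueSep G c C ∧ C ⊆ A := by
  classical
  set S : Set ℕ := {n : ℕ | ∃ u D, (u ∈ A ∧ G.IsClique D ∧ D.ncard ≤ c ∧
      Separates G D u v ∧ (∀ D' ⊆ D, G.IsClique D' → Separates G D' u v → D' = D)) ∧
      n = {x | AReach G D v x}.ncard} with hSdef
  have hSne : S.Nonempty := by
    obtain ⟨a, haA, D₀, h1, h2, h3⟩ := hsep
    obtain ⟨F, hFE, hFclq, hFc, hFsep, hFmin⟩ := exists_min_sep' h1 h2 h3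
    exact ⟨_, a, F, ⟨haA, hFclq, hFc, hFsep, hFmin⟩, rfl⟩
  have hSbdd : BddAbove S := by
    refine ⟨(Set.univ : Set V).ncard, fun n hn => ?_⟩
    obtain ⟨u, D, _, rfl⟩ := hn
    exact Set.ncard_le_ncard (Set.subset_univ _) (Set.toFinite _)
  obtain ⟨u, C, hP, hNval⟩ := Nat.sSup_mem hSne hSbdd
  have hmaxval : ∀ n ∈ S, n ≤ sSup S := fun n hn => le_csSup hSbdd hn
  obtain ⟨huA, hCclq, hCc, hCsep, hCmin⟩ := hP
  have huC : u ∉ C := hCsep.1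
  have hvC : v ∉ C := hCsep.2.1
  have hnotr : ¬ AReach G C u v := (separates_iff.1 hCsep).2.2
  suffices hins : InsepSet G c (A ∪ C) by
    have heq : A ∪ C = A := hA.2 (A ∪ C) Set.subset_union_left hins
    exact ⟨C, ⟨hCclq, hCc, u, v, hCsep, hCmin⟩,
      fun x hx => heq ▸ (Set.mem_union_right A hx)⟩
  by_contra hnot
  unfold InsepSet CInsep at hnot
  push_neg at hnot
  obtain ⟨x, hx, y, hy, D₀, hD₀clq, hD₀c, hD₀sep⟩ := hnot
  obtain ⟨a, haA, w, hwC, hsepaw⟩ : ∃ a ∈ A, ∃ w ∈ C, Separates G D₀ a w := by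
    rcases hx with hxa | hxc
    · rcases hy with hya | hyc
      · exact absurd hD₀sep (hA.1 x hxa y hya D₀ hD₀clq hD₀c)
      · exact ⟨x, hxa, y, hyc, hD₀sep⟩
    · rcases hy with hya | hyc
      · exact ⟨y, hya, x, hxc, Separates.symm' hD₀sep⟩
      · exact absurd hD₀sep (clique_insep hCclq x hxc y hyc D₀ hD₀clq hD₀c)
  set T : Set V := {x | AReach G C u x} ∪ C with hTdef
  have hbdT : ∀ x y, G.Adj x y → x ∈ T → x ∉ C → y ∈ T := by
    intro p q hadj hpT hpC
    have hpKu : AReach G C u p := hpT.resolve_right hpC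
    by_cases hqC : q ∈ C
    · exact Or.inr hqC
    · exact Or.inl (hpKu.trans (AReach.of_adj hadj hpC hqC))
  have hAT : A ⊆ T := by
    intro a' ha'
    by_cases ha'C : a' ∈ C
    · exact Or.inr ha'C
    · exact Or.inl (not_sep_of_cinsep (hA.1 u huA a' ha') hCclq hCc huC ha'C)
  have hvT : v ∉ T := by
    rintro (hv | hv)
    · exact hnotr hv
    · exact hvC hv
  set D₁ : Set V := D₀ ∩ T with hD₁def
  have hD₁sep : Separates G D₁ a w :=
    separates_inter Set.subset_union_right hCclq hbdT hsepaw (hAT haA) (Or.inr hwC)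
  have hD₁sub : D₁ ⊆ D₀ := Set.inter_subset_left
  have hwD₁ : w ∉ D₁ := fun h => hsepaw.2.1 (hD₁sub h)
  have haD₁ : a ∉ D₁ := fun h => hsepaw.1 (hD₁sub h)
  have hvD₁ : v ∉ D₁ := fun h => hvT h.2
  -- the hatom walk through w
  have hWr : AReach G (C \ {w}) u v := by
    have h2 := hatom (C \ {w}) (hCclq.subset Set.diff_subset) (by
      rw [Set.ncard_diff_singleton_of_mem hwC]
      exact Nat.sub_le_sub_right hCc 1)
    by_contra hr
    refine h2 ⟨u, v, ?_⟩
    rw [separates_iff]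
    exact ⟨fun h => huC h.1, fun h => hvC h.1, hr⟩
  obtain ⟨W, hWav⟩ := hWr
  have hwW : w ∈ W.support := by
    obtain ⟨z, hzC, hzsup⟩ := hCsep.2.2 W
    have hzw : z = w := by
      by_contra hne
      exact hWav z hzsup ⟨hzC, hne⟩
    exact hzw ▸ hzsup
  obtain ⟨q, hqsub, hqtail⟩ := exists_last_visit W hwW
  have hqC : ∀ x ∈ q.support, x ∈ C → x = w := by
    intro x hx hxC
    by_contra hne
    exact hWav x (hqsub x hx) ⟨hxC, hne⟩
  have hreach_wv : AReach G D₁ w v := by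
    refine ⟨q, fun x hx hxD₁ => ?_⟩
    rcases hxD₁.2 with hxKu | hxC
    · have hxw : x ≠ w := by
        rintro rfl
        exact hxKu.right_not_mem hwC
      have hxv : AReach G C x v := tail_reaches q hqC hqtail hx hxw
      exact hnotr (hxKu.trans hxv)
    · have := hqC x hx hxC
      exact hwD₁ (this ▸ hxD₁)
  have hD₁av : Separates G D₁ a v := by
    rw [separates_iff]
    refine ⟨haD₁, hvD₁, fun hr => ?_⟩
    exact (separates_iff.1 hD₁sep).2.2 (hr.trans hreach_wv.symm)
  obtain ⟨F, hFD₁, hFclq, hFc, hFsep, hFmin⟩ := exists_min_sep'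
    (hD₀clq.subset hD₁sub) (le_trans (Set.ncard_le_ncard hD₁sub (Set.toFinite _)) hD₀c) hD₁av
  have hvalS : {x | AReach G F v x}.ncard ∈ S := ⟨a, F, ⟨haA, hFclq, hFc, hFsep, hFmin⟩, rfl⟩
  have hsub : insert w {x | AReach G C v x} ⊆ {x | AReach G F v x} := by
    rintro x (rfl | hxKv)
    · exact (hreach_wv.mono hFD₁).symm
    · obtain ⟨p, hpav⟩ := hxKv
      refine ⟨p, fun z hz hzF => ?_⟩
      have hzD₁ : z ∈ D₁ := hFD₁ hzF
      rcases hzD₁.2 with hzKu | hzC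
      · exact hnotr (hzKu.trans (areach_of_mem_support p hpav hz).symm)
      · exact hpav z hz hzC
  have hwKv : w ∉ {x | AReach G C v x} := fun h => h.right_not_mem hwC
  have h1 : (insert w {x | AReach G C v x}).ncard ≤ {x | AReach G F v x}.ncard :=
    Set.ncard_le_ncard hsub (Set.toFinite _)
  have h2 : (insert w {x | AReach G C v x}).ncard = {x | AReach G C v x}.ncard + 1 :=
    Set.ncard_insert_of_notMem hwKv (Set.toFinite _)
  have h3 : {x | AReach G F v x}.ncard ≤ sSup S := hmaxval _ hvalS
  omega
end Aux3

namespace Aux4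
open Aux Aux2 Aux3

variable {G : SimpleGraph V} {c : ℕ}

lemma class_boundary {S : Set V} {k₀ : V} :
    ∀ p q, G.Adj p q → p ∈ {x | AReach G S k₀ x} ∪ S → p ∉ S →
      q ∈ {x | AReach G S k₀ x} ∪ S := by
  intro p q hadj hpT hpS
  have hp : AReach G S k₀ p := hpT.resolve_right hpS
  by_cases hqS : q ∈ S
  · exact Or.inr hqS
  · exact Or.inl (hp.trans (AReach.of_adj hadj hpS hqS))

lemma link_base [Fintype V] {C D : Set V} (hC : MinCliqueSep G c C) (hD : MinCliqueSep G c D)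
    (hins : InsepSet G c (C ∪ D)) :
    (TcGraph G c).Reachable (Sum.inr ⟨C, hC⟩) (Sum.inr ⟨D, hD⟩) := by
  obtain ⟨B, hB, hsubB⟩ := exists_max_insep hins
  have e1 : (TcGraph G c).Adj (Sum.inr ⟨C, hC⟩) (Sum.inl ⟨B, hB⟩) :=
    Or.inr ⟨⟨B, hB⟩, ⟨C, hC⟩, rfl, rfl, fun x hx => hsubB (Or.inl hx)⟩
  have e2 : (TcGraph G c).Adj (Sum.inl ⟨B, hB⟩) (Sum.inr ⟨D, hD⟩) :=
    Or.inl ⟨⟨B, hB⟩, ⟨D, hD⟩, rfl, rfl, fun x hx => hsubB (Or.inr hx)⟩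
  exact e1.reachable.trans e2.reachable

lemma link [Fintype V] : ∀ n : ℕ, ∀ (C D : Set V) (hC : MinCliqueSep G c C)
    (hD : MinCliqueSep G c D) (k₀ q₀ : V), k₀ ∉ C → q₀ ∉ D →
    D \ C ⊆ {x | AReach G C k₀ x} → C \ D ⊆ {x | AReach G D q₀ x} →
    (({x | AReach G C k₀ x} ∪ C) ∩ ({x | AReach G D q₀ x} ∪ D)).ncard ≤ n →
    (TcGraph G c).Reachable (Sum.inr ⟨C, hC⟩) (Sum.inr ⟨D, hD⟩) := by
  intro n
  induction n with
  | zero =>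
    intro C D hC hD k₀ q₀ hk₀ hq₀ hKD hQC hcard
    by_cases hins : InsepSet G c (C ∪ D)
    · exact link_base hC hD hins
    · exfalso
      unfold InsepSet CInsep at hins
      push_neg at hins
      obtain ⟨x, hx, y, hy, E, hEclq, hEc, hEsep⟩ := hins
      obtain ⟨γ, δ, hγC, hγD, hδD, hδC, -⟩ :
          ∃ γ δ, γ ∈ C ∧ γ ∉ D ∧ δ ∈ D ∧ δ ∉ C ∧ Separates G E γ δ := by
        rcases hx with hxC | hxD <;> rcases hy with hyC | hyD
        · exact absurd hEsep (clique_insep hC.1 x hxC y hyC E hEclq hEc)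
        · by_cases hxD : x ∈ D
          · exact absurd hEsep (clique_insep hD.1 x hxD y hyD E hEclq hEc)
          · by_cases hyC : y ∈ C
            · exact absurd hEsep (clique_insep hC.1 x hxC y hyC E hEclq hEc)
            · exact ⟨x, y, hxC, hxD, hyD, hyC, hEsep⟩
        · by_cases hyD : y ∈ D
          · exact absurd hEsep (clique_insep hD.1 x hxD y hyD E hEclq hEc)
          · by_cases hxC : x ∈ C
            · exact absurd hEsep (clique_insep hC.1 x hxC y hyC E hEclq hEc)
            · exact ⟨y, x, hyC, hyD, hxD, hxC, Separates.symm' hEsep⟩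
        · exact absurd hEsep (clique_insep hD.1 x hxD y hyD E hEclq hEc)
      have hδmem : δ ∈ ({x | AReach G C k₀ x} ∪ C) ∩ ({x | AReach G D q₀ x} ∪ D) :=
        ⟨Or.inl (hKD ⟨hδD, hδC⟩), Or.inr hδD⟩
      rw [Nat.le_zero, Set.ncard_eq_zero (Set.toFinite _)] at hcard
      rw [hcard] at hδmem
      exact hδmem
  | succ n ih =>
    intro C D hC hD k₀ q₀ hk₀ hq₀ hKD hQC hcard
    by_cases hins : InsepSet G c (C ∪ D)
    · exact link_base hC hD hins
    · unfold InsepSet CInsep at hins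
      push_neg at hins
      obtain ⟨x, hx, y, hy, E, hEclq, hEc, hEsep⟩ := hins
      obtain ⟨γ, δ, hγC, hγD, hδD, hδC, hEγδ⟩ :
          ∃ γ δ, γ ∈ C ∧ γ ∉ D ∧ δ ∈ D ∧ δ ∉ C ∧ Separates G E γ δ := by
        rcases hx with hxC | hxD <;> rcases hy with hyC | hyD
        · exact absurd hEsep (clique_insep hC.1 x hxC y hyC E hEclq hEc)
        · by_cases hxD : x ∈ D
          · exact absurd hEsep (clique_insep hD.1 x hxD y hyD E hEclq hEc)
          · by_cases hyC : y ∈ C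
            · exact absurd hEsep (clique_insep hC.1 x hxC y hyC E hEclq hEc)
            · exact ⟨x, y, hxC, hxD, hyD, hyC, hEsep⟩
        · by_cases hyD : y ∈ D
          · exact absurd hEsep (clique_insep hD.1 x hxD y hyD E hEclq hEc)
          · by_cases hxC : x ∈ C
            · exact absurd hEsep (clique_insep hC.1 x hxC y hyC E hEclq hEc)
            · exact ⟨y, x, hyC, hyD, hxD, hxC, Separates.symm' hEsep⟩
        · exact absurd hEsep (clique_insep hD.1 x hxD y hyD E hEclq hEc)
      set K : Set V := {x | AReach G C k₀ x} with hKdef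
      set Q : Set V := {x | AReach G D q₀ x} with hQdef
      -- clean E into the strip
      have hE1 : Separates G (E ∩ (K ∪ C)) γ δ :=
        separates_inter Set.subset_union_right hC.1 (fun p q => class_boundary p q)
          hEγδ (Or.inr hγC) (Or.inl (hKD ⟨hδD, hδC⟩))
      have hE2 : Separates G ((E ∩ (K ∪ C)) ∩ (Q ∪ D)) γ δ :=
        separates_inter Set.subset_union_right hD.1 (fun p q => class_boundary p q)
          hE1 (Or.inl (hQC ⟨hγC, hγD⟩)) (Or.inr hδD)
      have hE2sub : (E ∩ (K ∪ C)) ∩ (Q ∪ D) ⊆ E := fun z hz => hz.1.1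
      obtain ⟨F, hFsub, hFclq, hFc, hFsep, hFmin⟩ := exists_min_sep'
        (hEclq.subset hE2sub) (le_trans (Set.ncard_le_ncard hE2sub (Set.toFinite _)) hEc) hE2
      have hF : MinCliqueSep G c F := ⟨hFclq, hFc, γ, δ, hFsep, hFmin⟩
      have hγF : γ ∉ F := hFsep.1
      have hδF : δ ∉ F := hFsep.2.1
      have hnFγδ : ¬ AReach G F γ δ := (separates_iff.1 hFsep).2.2
      have hFTK : F ⊆ K ∪ C := fun z hz => (hFsub hz).1.2
      have hFTQ : F ⊆ Q ∪ D := fun z hz => (hFsub hz).2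
      have hreachC : ∀ z ∈ C, z ∉ F → AReach G F γ z := by
        intro z hzC hzF
        rcases eq_or_ne γ z with rfl | hne
        · exact AReach.refl hγF
        · exact AReach.of_adj (hC.1 hγC hzC hne) hγF hzF
      have hreachD : ∀ z ∈ D, z ∉ F → AReach G F δ z := by
        intro z hzD hzF
        rcases eq_or_ne δ z with rfl | hne
        · exact AReach.refl hδF
        · exact AReach.of_adj (hD.1 hδD hzD hne) hδF hzF
      have hQFQ : ∀ x, AReach G F γ x → AReach G D γ x := by
        intro x hx
        obtain ⟨p, hp⟩ := hx
        refine ⟨p, fun z hz hzD => ?_⟩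
        have hzF : z ∉ F := hp z hz
        exact hnFγδ ((areach_of_mem_support p hp hz).trans (hreachD z hzD hzF).symm)
      have hKFK : ∀ x, AReach G F δ x → AReach G C δ x := by
        intro x hx
        obtain ⟨p, hp⟩ := hx
        refine ⟨p, fun z hz hzC => ?_⟩
        have hzF : z ∉ F := hp z hz
        exact hnFγδ ((hreachC z hzC hzF).trans (areach_of_mem_support p hp hz).symm)
      have hcard1 : ((K ∪ C) ∩ ({x | AReach G F γ x} ∪ F)).ncard ≤ n := by
        have hsub1 : (K ∪ C) ∩ ({x | AReach G F γ x} ∪ F) ⊆ (K ∪ C) ∩ (Q ∪ D) := by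
          rintro z ⟨h1, h2⟩
          refine ⟨h1, ?_⟩
          rcases h2 with h2 | h2
          · exact Or.inl ((hQC ⟨hγC, hγD⟩).trans (hQFQ z h2))
          · exact hFTQ h2
        have hδ1 : δ ∈ (K ∪ C) ∩ (Q ∪ D) := ⟨Or.inl (hKD ⟨hδD, hδC⟩), Or.inr hδD⟩
        have hδ2 : δ ∉ (K ∪ C) ∩ ({x | AReach G F γ x} ∪ F) := by
          rintro ⟨-, h2 | h2⟩
          · exact hnFγδ h2
          · exact hδF h2
        have hlt : ((K ∪ C) ∩ ({x | AReach G F γ x} ∪ F)).ncard < ((K ∪ C) ∩ (Q ∪ D)).ncard :=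
          Set.ncard_lt_ncard ⟨hsub1, fun hss => hδ2 (hss hδ1)⟩ (Set.toFinite _)
        omega
      have r1 := ih C F hC hF k₀ γ hk₀ hγF
        (fun z hz => ((hFTK hz.1).resolve_right hz.2))
        (fun z hz => hreachC z hz.1 hz.2) hcard1
      have hcard2 : (({x | AReach G F δ x} ∪ F) ∩ (Q ∪ D)).ncard ≤ n := by
        have hsub2 : ({x | AReach G F δ x} ∪ F) ∩ (Q ∪ D) ⊆ (K ∪ C) ∩ (Q ∪ D) := by
          rintro z ⟨h1, h2⟩
          refine ⟨?_, h2⟩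
          rcases h1 with h1 | h1
          · exact Or.inl ((hKD ⟨hδD, hδC⟩).trans (hKFK z h1))
          · exact hFTK h1
        have hγ1 : γ ∈ (K ∪ C) ∩ (Q ∪ D) := ⟨Or.inr hγC, Or.inl (hQC ⟨hγC, hγD⟩)⟩
        have hγ2 : γ ∉ ({x | AReach G F δ x} ∪ F) ∩ (Q ∪ D) := by
          rintro ⟨h1 | h1, -⟩
          · exact hnFγδ h1.symm
          · exact hγF h1
        have hlt := Set.ncard_lt_ncard ⟨hsub2, fun hss => hγ2 (hss hγ1)⟩ (Set.toFinite _)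
        omega
      have r2 := ih F D hF hD δ q₀ hδF hq₀
        (fun z hz => hreachD z hz.1 hz.2)
        (fun z hz => ((hFTQ hz.1).resolve_right hz.2)) hcard2
      exact r1.trans r2

end Aux4

section Final
open Aux Aux2 Aux3 Aux4

/-- For a connected `(c-1)`-atom `G`, the incidence graph `T_c(G)` of maximal
`c`-atoms and minimal clique separators of size at most `c` is connected. -/
theorem stmt11 [Fintype V] (G : SimpleGraph V) (c : ℕ) (hc : 1 ≤ c)
    (hconn : G.Connected) (hatom : NoSmallCliqueSep G c) :
    (TcGraph G c).Connected := by
  classical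
  have hV : Nonempty V := hconn.nonempty
  have hinsep_empty : InsepSet G c (∅ : Set V) := fun x hx => absurd hx (Set.notMem_empty x)
  obtain ⟨A₀, hA₀, -⟩ := exists_max_insep hinsep_empty
  rw [SimpleGraph.connected_iff]
  refine ⟨?_, ⟨Sum.inl ⟨A₀, hA₀⟩⟩⟩
  -- sep-sep reachability
  have hsepsep : ∀ (C D : Set V) (hC : MinCliqueSep G c C) (hD : MinCliqueSep G c D),
      (TcGraph G c).Reachable (Sum.inr ⟨C, hC⟩) (Sum.inr ⟨D, hD⟩) := by
    intro C D hC hD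
    by_cases hDC : D \ C = ∅
    · rw [Set.diff_eq_empty] at hDC
      apply link_base hC hD
      rw [Set.union_eq_self_of_subset_right hDC]
      exact clique_insep hC.1
    · by_cases hCD : C \ D = ∅
      · rw [Set.diff_eq_empty] at hCD
        apply link_base hC hD
        rw [Set.union_eq_self_of_subset_left hCD]
        exact clique_insep hD.1
      · obtain ⟨k₀, hk₀⟩ := Set.nonempty_iff_ne_empty.2 hDC
        obtain ⟨q₀, hq₀⟩ := Set.nonempty_iff_ne_empty.2 hCD
        refine link _ C D hC hD k₀ q₀ hk₀.2 hq₀.2 ?_ ?_ le_rfl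
        · intro z hz
          rcases eq_or_ne k₀ z with rfl | hne
          · exact AReach.refl hk₀.2
          · exact AReach.of_adj (hD.1 hk₀.1 hz.1 hne) hk₀.2 hz.2
        · intro z hz
          rcases eq_or_ne q₀ z with rfl | hne
          · exact AReach.refl hq₀.2
          · exact AReach.of_adj (hC.1 hq₀.1 hz.1 hne) hq₀.2 hz.2
  -- every separator node is adjacent to an atom node
  have hatt : ∀ (C : Set V) (hC : MinCliqueSep G c C), ∃ (B : Set V) (hB : MaxInsepSet G c B),
      (TcGraph G c).Adj (Sum.inr ⟨C, hC⟩) (Sum.inl ⟨B, hB⟩) := by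
    intro C hC
    obtain ⟨B, hB, hsub⟩ := exists_max_insep (clique_insep hC.1 (c := c))
    exact ⟨B, hB, Or.inr ⟨⟨B, hB⟩, ⟨C, hC⟩, rfl, rfl, hsub⟩⟩
  -- a maximal inseparable set distinct from another contains a min clique separator
  have hfind : ∀ (A B : Set V) (hA : MaxInsepSet G c A) (hB : MaxInsepSet G c B), A ≠ B →
      ∃ C : Set V, MinCliqueSep G c C ∧ C ⊆ A := by
    intro A B hA hB hAB
    have hBA : ¬ B ⊆ A := fun h => hAB (hB.2 A h hA.1)
    obtain ⟨v, hvB, hvA⟩ := Set.not_subset.1 hBA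
    have h1 : ¬ InsepSet G c (A ∪ {v}) := by
      intro h
      have heq := hA.2 _ Set.subset_union_left h
      exact hvA (heq ▸ (Or.inr rfl : v ∈ A ∪ {v}))
    unfold InsepSet CInsep at h1
    push_neg at h1
    obtain ⟨x, hx, y, hy, E, hEclq, hEc, hEsep⟩ := h1
    refine crux hatom hA (v := v) ?_
    rcases hx with hxA | hxv <;> rcases hy with hyA | hyv
    · exact absurd hEsep (hA.1 x hxA y hyA E hEclq hEc)
    · rw [Set.mem_singleton_iff] at hyv
      subst hyv
      exact ⟨x, hxA, E, hEclq, hEc, hEsep⟩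
    · rw [Set.mem_singleton_iff] at hxv
      subst hxv
      exact ⟨y, hyA, E, hEclq, hEc, Separates.symm' hEsep⟩
    · rw [Set.mem_singleton_iff] at hxv hyv
      subst hxv; subst hyv
      exact absurd hEsep not_separates_self
  -- atom-atom reachability
  have haa : ∀ (A B : Set V) (hA : MaxInsepSet G c A) (hB : MaxInsepSet G c B),
      (TcGraph G c).Reachable (Sum.inl ⟨A, hA⟩) (Sum.inl ⟨B, hB⟩) := by
    intro A B hA hB
    rcases eq_or_ne A B with rfl | hAB
    · rfl
    · obtain ⟨CA, hCA, hCAsub⟩ := hfind A B hA hB hAB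
      obtain ⟨CB, hCB, hCBsub⟩ := hfind B A hB hA hAB.symm
      have e1 : (TcGraph G c).Adj (Sum.inl ⟨A, hA⟩) (Sum.inr ⟨CA, hCA⟩) :=
        Or.inl ⟨⟨A, hA⟩, ⟨CA, hCA⟩, rfl, rfl, hCAsub⟩
      have e2 : (TcGraph G c).Adj (Sum.inr ⟨CB, hCB⟩) (Sum.inl ⟨B, hB⟩) :=
        Or.inr ⟨⟨B, hB⟩, ⟨CB, hCB⟩, rfl, rfl, hCBsub⟩
      exact (e1.reachable.trans (hsepsep CA CB hCA hCB)).trans e2.reachable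
  rintro (⟨A, hA⟩ | ⟨C, hC⟩) (⟨B, hB⟩ | ⟨D, hD⟩)
  · exact haa A B hA hB
  · obtain ⟨B₂, hB₂, e⟩ := hatt D hD
    exact (haa A B₂ hA hB₂).trans e.symm.reachable
  · obtain ⟨B₂, hB₂, e⟩ := hatt C hC
    exact e.reachable.trans (haa B₂ B hB₂ hB)
  · exact hsepsep C D hC hD

end Final
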